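/- There exists a (necessarily unique) k-algebra homomorphism π : H → L with π(g₁) = 1, π(g₂) = 1, π(x₁) = 0, π(y₁) = Ē, and π(x₂) = w̄₀, where Ē, w̄₀ denote the images of E, w₀ in L. The map π is surjective, it satisfies π(z_n) = w̄_n for all 0 ≤ n ≤ G, and its kernel equals the two-sided ideal of H generated by x₁, g₁ − 1, and g₂ − 1. -/

import Mathlib

noncomputable section

namespace LstrSplit

variable (k : Type*) [Field k]

/-! ### The algebra `H = B(𝔏_1(1, G)) # k[(ℤ/f)²]` (the split case `q = 1`) -/

/-- Generators: `x₁ = ι 0`, `y₁ = ι 1`, `x₂ = ι 2`, `g₁ = ι 3`, `g₂ = ι 4`. -/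
def X1 : FreeAlgebra k (Fin 5) := FreeAlgebra.ι k (0 : Fin 5)
def Y1 : FreeAlgebra k (Fin 5) := FreeAlgebra.ι k (1 : Fin 5)
def X2 : FreeAlgebra k (Fin 5) := FreeAlgebra.ι k (2 : Fin 5)
def G1 : FreeAlgebra k (Fin 5) := FreeAlgebra.ι k (3 : Fin 5)
def G2 : FreeAlgebra k (Fin 5) := FreeAlgebra.ι k (4 : Fin 5)

/-- `z_0 = x₂`, `z_{n+1} = y₁ z_n − z_n y₁`. -/
def z : ℕ → FreeAlgebra k (Fin 5)
  | 0 => X2 k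
  | n + 1 => Y1 k * z n - z n * Y1 k

/-- The defining relations of `H`. -/
def gens (a : k) (p G f : ℕ) : Set (FreeAlgebra k (Fin 5)) :=
  ({Y1 k * X1 k - X1 k * Y1 k + (2⁻¹ : k) • (X1 k) ^ 2,
    (X1 k) ^ p, (Y1 k) ^ p,
    X1 k * X2 k - X2 k * X1 k,
    z k (G + 1),
    (G1 k) ^ f - 1, (G2 k) ^ f - 1,
    G1 k * G2 k - G2 k * G1 k,
    G1 k * X1 k - X1 k * G1 k,
    G1 k * Y1 k - Y1 k * G1 k - X1 k * G1 k,
    G1 k * X2 k - X2 k * G1 k,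
    G2 k * X1 k - X1 k * G2 k,
    G2 k * Y1 k - Y1 k * G2 k - a • (X1 k * G2 k),
    G2 k * X2 k - X2 k * G2 k} : Set (FreeAlgebra k (Fin 5)))
  ∪ {e | ∃ t < G, e = z k t * z k (t + 1) - z k (t + 1) * z k t}
  ∪ {e | ∃ t ≤ G, e = (z k t) ^ p}

def rel (a : k) (p G f : ℕ) :
    FreeAlgebra k (Fin 5) → FreeAlgebra k (Fin 5) → Prop :=
  fun u v => u ∈ gens k a p G f ∧ v = 0

def H (a : k) (p G f : ℕ) := RingQuot (rel k a p G f)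

instance (a : k) (p G f : ℕ) : Ring (H k a p G f) :=
  inferInstanceAs (Ring (RingQuot (rel k a p G f)))

instance (a : k) (p G f : ℕ) : Algebra k (H k a p G f) :=
  inferInstanceAs (Algebra k (RingQuot (rel k a p G f)))

def x1H (a : k) (p G f : ℕ) : H k a p G f :=
  RingQuot.mkAlgHom k (rel k a p G f) (X1 k)
def y1H (a : k) (p G f : ℕ) : H k a p G f :=
  RingQuot.mkAlgHom k (rel k a p G f) (Y1 k)
def x2H (a : k) (p G f : ℕ) : H k a p G f :=
  RingQuot.mkAlgHom k (rel k a p G f) (X2 k)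
def g1H (a : k) (p G f : ℕ) : H k a p G f :=
  RingQuot.mkAlgHom k (rel k a p G f) (G1 k)
def g2H (a : k) (p G f : ℕ) : H k a p G f :=
  RingQuot.mkAlgHom k (rel k a p G f) (G2 k)
def zH (a : k) (p G f : ℕ) (t : ℕ) : H k a p G f :=
  RingQuot.mkAlgHom k (rel k a p G f) (z k t)

/-! ### The restricted enveloping algebra `L = u(V(G) ⋊ kE)` -/

/-- Generators: `E = ι 0`, `w₀ = ι 1`. -/
def E : FreeAlgebra k (Fin 2) := FreeAlgebra.ι k (0 : Fin 2)
def W0 : FreeAlgebra k (Fin 2) := FreeAlgebra.ι k (1 : Fin 2)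

/-- `w_{n+1} = E w_n − w_n E`. -/
def w : ℕ → FreeAlgebra k (Fin 2)
  | 0 => W0 k
  | n + 1 => E k * w n - w n * E k

def gensL (p G : ℕ) : Set (FreeAlgebra k (Fin 2)) :=
  {e | ∃ m ≤ G, ∃ n ≤ G, e = w k m * w k n - w k n * w k m}
  ∪ {E k * w k G - w k G * E k, (E k) ^ p}
  ∪ {e | ∃ n ≤ G, e = (w k n) ^ p}

def relL (p G : ℕ) :
    FreeAlgebra k (Fin 2) → FreeAlgebra k (Fin 2) → Prop :=
  fun u v => u ∈ gensL k p G ∧ v = 0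

def L (p G : ℕ) := RingQuot (relL k p G)

instance (p G : ℕ) : Ring (L k p G) :=
  inferInstanceAs (Ring (RingQuot (relL k p G)))

instance (p G : ℕ) : Algebra k (L k p G) :=
  inferInstanceAs (Algebra k (RingQuot (relL k p G)))

def EL (p G : ℕ) : L k p G := RingQuot.mkAlgHom k (relL k p G) (E k)
def wL (p G : ℕ) (n : ℕ) : L k p G := RingQuot.mkAlgHom k (relL k p G) (w k n)

end LstrSplit

open LstrSplit


section Auxiliary

open LstrSplit

variable {k : Type*} [Field k] {a : k} {p G f : ℕ}

private lemma gens_zero {e : FreeAlgebra k (Fin 5)} (he : e ∈ gens k a p G f) :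
    RingQuot.mkAlgHom k (rel k a p G f) e = 0 := by
  have h := RingQuot.mkAlgHom_rel k (s := rel k a p G f) (x := e) (y := 0) ⟨he, rfl⟩
  simpa using h

private lemma gensL_zero {e : FreeAlgebra k (Fin 2)} (he : e ∈ gensL k p G) :
    RingQuot.mkAlgHom k (relL k p G) e = 0 := by
  have h := RingQuot.mkAlgHom_rel k (s := relL k p G) (x := e) (y := 0) ⟨he, rfl⟩
  simpa using h

private lemma zH_succ (n : ℕ) :
    zH k a p G f (n + 1)
      = y1H k a p G f * zH k a p G f n - zH k a p G f n * y1H k a p G f := by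
  show RingQuot.mkAlgHom k (rel k a p G f) (Y1 k * z k n - z k n * Y1 k) = _
  rw [map_sub, map_mul, map_mul]; rfl

private lemma wL_succ (n : ℕ) :
    wL k p G (n + 1) = EL k p G * wL k p G n - wL k p G n * EL k p G := by
  show RingQuot.mkAlgHom k (relL k p G) (E k * w k n - w k n * E k) = _
  rw [map_sub, map_mul, map_mul]; rfl

private lemma zH_G1 : zH k a p G f (G + 1) = 0 :=
  gens_zero (Or.inl (Or.inl (by simp)))

private lemma zH_zero {n : ℕ} (hn : G + 1 ≤ n) : zH k a p G f n = 0 := by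
  obtain ⟨d, rfl⟩ := Nat.exists_eq_add_of_le hn
  clear hn
  induction d with
  | zero => exact zH_G1
  | succ d ih =>
      rw [show G + 1 + (d + 1) = (G + 1 + d) + 1 by omega, zH_succ, ih]
      simp

private lemma zH_adj (t : ℕ) :
    zH k a p G f t * zH k a p G f (t + 1)
      = zH k a p G f (t + 1) * zH k a p G f t := by
  rcases lt_or_ge t G with ht | ht
  · have h0 : RingQuot.mkAlgHom k (rel k a p G f)
        (z k t * z k (t + 1) - z k (t + 1) * z k t) = 0 :=
      gens_zero (Or.inl (Or.inr ⟨t, ht, rfl⟩))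
    rw [map_sub, map_mul, map_mul] at h0
    exact sub_eq_zero.mp h0
  · rw [show zH k a p G f (t + 1) = 0 from zH_zero (by omega)]
    simp

private lemma zH_comm_gap :
    ∀ d m, zH k a p G f m * zH k a p G f (m + d)
      = zH k a p G f (m + d) * zH k a p G f m := by
  intro d
  induction d using Nat.strong_induction_on with
  | _ d ih =>
    match d with
    | 0 => intro m; rfl
    | 1 => exact fun m => zH_adj m
    | (n + 2) =>
      intro m
      have h1 := ih (n + 1) (by omega) m
      have h2 := ih n (by omega) (m + 1)
      rw [show (m + 1) + n = m + (n + 1) by omega] at h2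
      rw [zH_succ m] at h2
      rw [show m + (n + 2) = (m + (n + 1)) + 1 by omega, zH_succ (m + (n + 1))]
      set yv := y1H k a p G f
      set A := zH k a p G f m
      set B := zH k a p G f (m + (n + 1))
      have e1 : A * B - B * A = 0 := sub_eq_zero_of_eq h1
      have e2 : (yv * A - A * yv) * B - B * (yv * A - A * yv) = 0 :=
        sub_eq_zero_of_eq h2
      have expand : A * (yv * B - B * yv) - (yv * B - B * yv) * A
          = -((yv * A - A * yv) * B - B * (yv * A - A * yv))
            + (yv * (A * B - B * A) - (A * B - B * A) * yv) := by
        noncomm_ring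
      rw [e1, e2] at expand
      simp only [neg_zero, mul_zero, zero_mul, sub_zero, zero_add,
        add_zero, sub_self] at expand
      exact sub_eq_zero.mp expand

private lemma zH_comm (m n : ℕ) :
    zH k a p G f m * zH k a p G f n = zH k a p G f n * zH k a p G f m := by
  rcases le_total m n with h | h
  · obtain ⟨d, rfl⟩ := Nat.exists_eq_add_of_le h
    exact zH_comm_gap d m
  · obtain ⟨d, rfl⟩ := Nat.exists_eq_add_of_le h
    exact (zH_comm_gap d n).symm

private lemma y1H_pow_p : y1H k a p G f ^ p = 0 := by
  have h0 : RingQuot.mkAlgHom k (rel k a p G f) ((Y1 k) ^ p) = 0 :=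
    gens_zero (Or.inl (Or.inl (by simp)))
  rw [map_pow] at h0
  exact h0

private lemma zH_pow_p {t : ℕ} (ht : t ≤ G) : zH k a p G f t ^ p = 0 := by
  have h0 : RingQuot.mkAlgHom k (rel k a p G f) ((z k t) ^ p) = 0 :=
    gens_zero (Or.inr ⟨t, ht, rfl⟩)
  rw [map_pow] at h0
  exact h0

private lemma EL_pow_p : EL k p G ^ p = 0 := by
  have h0 : RingQuot.mkAlgHom k (relL k p G) ((E k) ^ p) = 0 :=
    gensL_zero (Or.inl (Or.inr (by simp)))
  rw [map_pow] at h0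
  exact h0

private lemma wL_pow_p {t : ℕ} (ht : t ≤ G) : wL k p G t ^ p = 0 := by
  have h0 : RingQuot.mkAlgHom k (relL k p G) ((w k t) ^ p) = 0 :=
    gensL_zero (Or.inr ⟨t, ht, rfl⟩)
  rw [map_pow] at h0
  exact h0

private lemma wL_comm {m n : ℕ} (hm : m ≤ G) (hn : n ≤ G) :
    wL k p G m * wL k p G n = wL k p G n * wL k p G m := by
  have h0 : RingQuot.mkAlgHom k (relL k p G)
      (w k m * w k n - w k n * w k m) = 0 :=
    gensL_zero (Or.inl (Or.inl ⟨m, hm, n, hn, rfl⟩))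
  rw [map_sub, map_mul, map_mul] at h0
  exact sub_eq_zero.mp h0

private lemma EL_wLG_comm : EL k p G * wL k p G G = wL k p G G * EL k p G := by
  have h0 : RingQuot.mkAlgHom k (relL k p G)
      (E k * w k G - w k G * E k) = 0 :=
    gensL_zero (Or.inl (Or.inr (by simp)))
  rw [map_sub, map_mul, map_mul] at h0
  exact sub_eq_zero.mp h0

variable (k p G) in
/-- The auxiliary map from the free algebra on five generators to `L`. -/
private def phiPi : FreeAlgebra k (Fin 5) →ₐ[k] L k p G :=
  FreeAlgebra.lift k (![0, EL k p G, wL k p G 0, 1, 1] : Fin 5 → L k p G)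

private lemma phiPi_X1 : phiPi k p G (X1 k) = 0 := by simp [phiPi, X1]
private lemma phiPi_Y1 : phiPi k p G (Y1 k) = EL k p G := by simp [phiPi, Y1]
private lemma phiPi_X2 : phiPi k p G (X2 k) = wL k p G 0 := by simp [phiPi, X2]
private lemma phiPi_G1 : phiPi k p G (G1 k) = 1 := by simp [phiPi, G1]
private lemma phiPi_G2 : phiPi k p G (G2 k) = 1 := by simp [phiPi, G2]

private lemma phiPi_z (n : ℕ) : phiPi k p G (z k n) = wL k p G n := by
  induction n with
  | zero => exact phiPi_X2
  | succ n ih =>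
      show phiPi k p G (Y1 k * z k n - z k n * Y1 k) = _
      rw [map_sub, map_mul, map_mul, ih, phiPi_Y1, wL_succ]

private lemma phiPi_gens (hp0 : p ≠ 0) {e : FreeAlgebra k (Fin 5)}
    (he : e ∈ gens k a p G f) : phiPi k p G e = 0 := by
  rcases he with (he | ⟨t, ht, rfl⟩) | ⟨t, ht, rfl⟩
  · simp only [Set.mem_insert_iff, Set.mem_singleton_iff] at he
    rcases he with rfl | rfl | rfl | rfl | rfl | rfl | rfl | rfl | rfl | rfl |
      rfl | rfl | rfl | rfl
    · simp [map_sub, map_mul, map_add, map_smul, map_pow, phiPi_X1, phiPi_Y1,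
        zero_pow]
    · simp [map_pow, phiPi_X1, zero_pow, hp0]
    · rw [map_pow, phiPi_Y1, EL_pow_p]
    · simp [map_sub, map_mul, phiPi_X1, phiPi_X2]
    · rw [phiPi_z, wL_succ, EL_wLG_comm, sub_self]
    · simp [map_sub, map_pow, phiPi_G1]
    · simp [map_sub, map_pow, phiPi_G2]
    · simp [map_sub, map_mul, phiPi_G1, phiPi_G2]
    · simp [map_sub, map_mul, phiPi_G1, phiPi_X1]
    · simp [map_sub, map_mul, phiPi_G1, phiPi_Y1, phiPi_X1]
    · simp [map_sub, map_mul, phiPi_G1, phiPi_X2]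
    · simp [map_sub, map_mul, phiPi_G2, phiPi_X1]
    · simp [map_sub, map_mul, map_smul, phiPi_G2, phiPi_Y1, phiPi_X1]
    · simp [map_sub, map_mul, phiPi_G2, phiPi_X2]
  · rw [map_sub, map_mul, map_mul, phiPi_z, phiPi_z,
      wL_comm (le_of_lt ht) ht, sub_self]
  · rw [map_pow, phiPi_z, wL_pow_p ht]

variable (k a p G f) in
/-- The auxiliary map from the free algebra on two generators to `H`. -/
private def phiPsi : FreeAlgebra k (Fin 2) →ₐ[k] H k a p G f :=
  FreeAlgebra.lift k (![y1H k a p G f, x2H k a p G f] : Fin 2 → H k a p G f)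

private lemma phiPsi_E : phiPsi k a p G f (E k) = y1H k a p G f := by
  simp [phiPsi, E]

private lemma phiPsi_W0 : phiPsi k a p G f (W0 k) = x2H k a p G f := by
  simp [phiPsi, W0]

private lemma phiPsi_w (n : ℕ) : phiPsi k a p G f (w k n) = zH k a p G f n := by
  induction n with
  | zero => exact phiPsi_W0
  | succ n ih =>
      show phiPsi k a p G f (E k * w k n - w k n * E k) = _
      rw [map_sub, map_mul, map_mul, ih, phiPsi_E, zH_succ]

private lemma phiPsi_gens {e : FreeAlgebra k (Fin 2)} (he : e ∈ gensL k p G) :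
    phiPsi k a p G f e = 0 := by
  rcases he with (⟨m, hm, n, hn, rfl⟩ | he) | ⟨n, hn, rfl⟩
  · rw [map_sub, map_mul, map_mul, phiPsi_w, phiPsi_w, zH_comm, sub_self]
  · simp only [Set.mem_insert_iff, Set.mem_singleton_iff] at he
    rcases he with rfl | rfl
    · rw [map_sub, map_mul, map_mul, phiPsi_E, phiPsi_w, ← zH_succ,
        zH_zero le_rfl]
    · rw [map_pow, phiPsi_E, y1H_pow_p]
  · rw [map_pow, phiPsi_w, zH_pow_p hn]

end Auxiliary

/-- Let `k` be a field of odd prime characteristic `p`,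
`f` a positive multiple of `p`, `1 ≤ G ≤ p − 1` and `a ∈ k` with
`2a = −G·1_k`.  There is a unique algebra map `π : H → L` with `π(g₁) = 1`,
`π(g₂) = 1`, `π(x₁) = 0`, `π(y₁) = Ē`, `π(x₂) = w̄₀`; it is surjective,
satisfies `π(z_n) = w̄_n` for `0 ≤ n ≤ G`, and its kernel is the two-sided
ideal of `H` generated by `x₁`, `g₁ − 1` and `g₂ − 1`. -/
theorem laestrygonian_split_projection
    (k : Type*) [Field k] (p : ℕ) (hp : p.Prime) (hodd : Odd p)
    [CharP k p] (f : ℕ) (hf : 0 < f) (hdvd : p ∣ f)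
    (G : ℕ) (hG1 : 1 ≤ G) (hG2 : G ≤ p - 1)
    (a : k) (ha : 2 * a = -(G : k)) :
    (∃! π : H k a p G f →ₐ[k] L k p G,
      π (g1H k a p G f) = 1 ∧ π (g2H k a p G f) = 1 ∧
      π (x1H k a p G f) = 0 ∧ π (y1H k a p G f) = EL k p G ∧
      π (x2H k a p G f) = wL k p G 0) ∧
    (∀ π : H k a p G f →ₐ[k] L k p G,
      (π (g1H k a p G f) = 1 ∧ π (g2H k a p G f) = 1 ∧
       π (x1H k a p G f) = 0 ∧ π (y1H k a p G f) = EL k p G ∧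
       π (x2H k a p G f) = wL k p G 0) →
      Function.Surjective π ∧
      (∀ n ≤ G, π (zH k a p G f n) = wL k p G n) ∧
      (∀ h : H k a p G f, π h = 0 ↔
        h ∈ TwoSidedIdeal.span
          ({x1H k a p G f, g1H k a p G f - 1, g2H k a p G f - 1} :
            Set (H k a p G f)))) := by
  classical
  have hp0 : p ≠ 0 := hp.ne_zero
  -- the canonical map π₀
  have hrel : ∀ ⦃x y : FreeAlgebra k (Fin 5)⦄, rel k a p G f x y →
      phiPi k p G x = phiPi k p G y := by
    rintro x y ⟨hx, rfl⟩
    rw [map_zero]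
    exact phiPi_gens hp0 hx
  let π₀ : H k a p G f →ₐ[k] L k p G := RingQuot.liftAlgHom k ⟨phiPi k p G, hrel⟩
  have hπ₀ : ∀ x : FreeAlgebra k (Fin 5),
      π₀ (RingQuot.mkAlgHom k (rel k a p G f) x) = phiPi k p G x := fun x =>
    RingQuot.liftAlgHom_mkAlgHom_apply k (phiPi k p G) hrel x
  have hπ₀g1 : π₀ (g1H k a p G f) = 1 := (hπ₀ (G1 k)).trans phiPi_G1
  have hπ₀g2 : π₀ (g2H k a p G f) = 1 := (hπ₀ (G2 k)).trans phiPi_G2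
  have hπ₀x1 : π₀ (x1H k a p G f) = 0 := (hπ₀ (X1 k)).trans phiPi_X1
  have hπ₀y1 : π₀ (y1H k a p G f) = EL k p G := (hπ₀ (Y1 k)).trans phiPi_Y1
  have hπ₀x2 : π₀ (x2H k a p G f) = wL k p G 0 := (hπ₀ (X2 k)).trans phiPi_X2
  -- the map ψ
  have hrelL : ∀ ⦃x y : FreeAlgebra k (Fin 2)⦄, relL k p G x y →
      phiPsi k a p G f x = phiPsi k a p G f y := by
    rintro x y ⟨hx, rfl⟩
    rw [map_zero]
    exact phiPsi_gens hx
  let ψ : L k p G →ₐ[k] H k a p G f :=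
    RingQuot.liftAlgHom k ⟨phiPsi k a p G f, hrelL⟩
  have hψ : ∀ x : FreeAlgebra k (Fin 2),
      ψ (RingQuot.mkAlgHom k (relL k p G) x) = phiPsi k a p G f x := fun x =>
    RingQuot.liftAlgHom_mkAlgHom_apply k (phiPsi k a p G f) hrelL x
  have hψE : ψ (EL k p G) = y1H k a p G f := (hψ (E k)).trans phiPsi_E
  have hψW0 : ψ (wL k p G 0) = x2H k a p G f := (hψ (W0 k)).trans phiPsi_W0
  -- uniqueness of maps with the prescribed values
  have ext5 : ∀ π π' : H k a p G f →ₐ[k] L k p G,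
      π (g1H k a p G f) = π' (g1H k a p G f) →
      π (g2H k a p G f) = π' (g2H k a p G f) →
      π (x1H k a p G f) = π' (x1H k a p G f) →
      π (y1H k a p G f) = π' (y1H k a p G f) →
      π (x2H k a p G f) = π' (x2H k a p G f) → π = π' := by
    intro π π' h1 h2 h3 h4 h5
    apply RingQuot.ringQuot_ext'
    apply FreeAlgebra.hom_ext
    funext i
    simp only [AlgHom.coe_comp, Function.comp_apply]
    fin_cases i
    · exact h3
    · exact h4
    · exact h5
    · exact h1
    · exact h2
  refine ⟨⟨π₀, ⟨hπ₀g1, hπ₀g2, hπ₀x1, hπ₀y1, hπ₀x2⟩, ?_⟩, ?_⟩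
  · rintro π' ⟨h1, h2, h3, h4, h5⟩
    exact ext5 π' π₀ (h1.trans hπ₀g1.symm) (h2.trans hπ₀g2.symm)
      (h3.trans hπ₀x1.symm) (h4.trans hπ₀y1.symm) (h5.trans hπ₀x2.symm)
  · rintro π ⟨hg1, hg2, hx1, hy1, hx2⟩
    -- π ∘ ψ = id
    have hcomp : π.comp ψ = AlgHom.id k (L k p G) := by
      apply RingQuot.ringQuot_ext'
      apply FreeAlgebra.hom_ext
      funext i
      simp only [AlgHom.coe_comp, Function.comp_apply, AlgHom.id_apply]
      fin_cases i
      · show π (ψ (EL k p G)) = EL k p G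
        rw [hψE, hy1]
      · show π (ψ (wL k p G 0)) = wL k p G 0
        rw [hψW0, hx2]
    have hsurj : Function.Surjective π := fun l =>
      ⟨ψ l, by simpa using AlgHom.congr_fun hcomp l⟩
    have hzn : ∀ n : ℕ, π (zH k a p G f n) = wL k p G n := by
      intro n
      induction n with
      | zero => exact hx2
      | succ n ih => rw [zH_succ, map_sub, map_mul, map_mul, ih, hy1, wL_succ]
    refine ⟨hsurj, fun n _ => hzn n, ?_⟩
    set I : TwoSidedIdeal (H k a p G f) := TwoSidedIdeal.span
      ({x1H k a p G f, g1H k a p G f - 1, g2H k a p G f - 1} :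
        Set (H k a p G f)) with hI
    have hx1I : x1H k a p G f ∈ I := TwoSidedIdeal.subset_span (by simp)
    have hg1I : g1H k a p G f - 1 ∈ I := TwoSidedIdeal.subset_span (by simp)
    have hg2I : g2H k a p G f - 1 ∈ I := TwoSidedIdeal.subset_span (by simp)
    have hcl : ∀ h : H k a p G f, h - ψ (π h) ∈ I := by
      intro h
      obtain ⟨x, rfl⟩ := RingQuot.mkAlgHom_surjective k (rel k a p G f) h
      induction x with
      | grade0 r =>
          have e0 : (RingQuot.mkAlgHom k (rel k a p G f))
                ((algebraMap k (FreeAlgebra k (Fin 5))) r)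
              = (algebraMap k (H k a p G f)) r :=
            AlgHom.commutes _ r
          rw [e0, AlgHom.commutes, AlgHom.commutes, sub_self]
          exact I.zero_mem
      | grade1 i =>
          fin_cases i
          · show x1H k a p G f - ψ (π (x1H k a p G f)) ∈ I
            rw [hx1, map_zero, sub_zero]
            exact hx1I
          · show y1H k a p G f - ψ (π (y1H k a p G f)) ∈ I
            rw [hy1, hψE, sub_self]
            exact I.zero_mem
          · show x2H k a p G f - ψ (π (x2H k a p G f)) ∈ I
            rw [hx2, hψW0, sub_self]
            exact I.zero_mem
          · show g1H k a p G f - ψ (π (g1H k a p G f)) ∈ I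
            rw [hg1, map_one]
            exact hg1I
          · show g2H k a p G f - ψ (π (g2H k a p G f)) ∈ I
            rw [hg2, map_one]
            exact hg2I
      | mul x y hx hy =>
          set A : H k a p G f := RingQuot.mkAlgHom k (rel k a p G f) x
          set B : H k a p G f := RingQuot.mkAlgHom k (rel k a p G f) y
          rw [show RingQuot.mkAlgHom k (rel k a p G f) (x * y) = A * B from map_mul _ x y]
          show A * B - ψ (π (A * B)) ∈ I
          rw [map_mul, map_mul]
          have key : A * B - ψ (π A) * ψ (π B)
              = (A - ψ (π A)) * B + ψ (π A) * (B - ψ (π B)) := by noncomm_ring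
          rw [key]
          exact I.add_mem (I.mul_mem_right _ _ hx) (I.mul_mem_left _ _ hy)
      | add x y hx hy =>
          set A : H k a p G f := RingQuot.mkAlgHom k (rel k a p G f) x
          set B : H k a p G f := RingQuot.mkAlgHom k (rel k a p G f) y
          rw [show RingQuot.mkAlgHom k (rel k a p G f) (x + y) = A + B from map_add _ x y]
          show A + B - ψ (π (A + B)) ∈ I
          rw [map_add, map_add]
          have key : A + B - (ψ (π A) + ψ (π B))
              = (A - ψ (π A)) + (B - ψ (π B)) := by noncomm_ring
          rw [key]
          exact I.add_mem hx hy
    intro h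
    constructor
    · intro hπh
      have := hcl h
      rwa [hπh, map_zero, sub_zero] at this
    · intro hh
      have hker : h ∈ TwoSidedIdeal.ker π := by
        refine TwoSidedIdeal.mem_span_iff.mp hh _ ?_
        intro x hx
        simp only [Set.mem_insert_iff, Set.mem_singleton_iff] at hx
        rcases hx with rfl | rfl | rfl
        · exact (TwoSidedIdeal.mem_ker π).mpr hx1
        · exact (TwoSidedIdeal.mem_ker π).mpr (by rw [map_sub, hg1, map_one, sub_self])
        · exact (TwoSidedIdeal.mem_ker π).mpr (by rw [map_sub, hg2, map_one, sub_self])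
      exact (TwoSidedIdeal.mem_ker π).mp hker
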